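/- Let d ≥ 1 be an integer and let 0 < α_1 < α_2 < ⋯ < α_d < π be real numbers. Then the determinant of the d × d matrix whose (i,j) entry is sin(i·α_j) equals 2^{d(d-1)/2} · (∏_{j=1}^{d} sin α_j) · ∏_{1 ≤ i < j ≤ d} (cos α_j - cos α_i). -/

import Mathlib

open Polynomial Polynomial.Chebyshev in
private theorem U_deg_coeff : ∀ n : ℕ,
    (U ℝ (n : ℤ)).natDegree ≤ n ∧ (U ℝ (n : ℤ)).coeff n = 2 ^ n := by
  intro n
  induction n using Nat.strong_induction_on with
  | _ n ih =>
    match n with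
    | 0 => simp [U_zero]
    | 1 =>
      have hU1 : U ℝ ((1 : ℕ) : ℤ) = C 2 * X := by
        rw [show ((1:ℕ):ℤ) = 1 by norm_num, U_one, map_ofNat]
      constructor
      · rw [hU1]; exact (natDegree_C_mul_le 2 X).trans (by simp)
      · rw [hU1, coeff_C_mul, coeff_X_one]; norm_num
    | (k + 2) =>
      have h1 := ih (k + 1) (by omega)
      have h0 := ih k (by omega)
      have hrec : U ℝ ((k + 2 : ℕ) : ℤ) = 2 * X * U ℝ ((k + 1 : ℕ) : ℤ) - U ℝ (k : ℤ) := by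
        push_cast
        exact U_add_two ℝ k
      constructor
      · rw [hrec]
        refine natDegree_sub_le_iff_left ?_ |>.mpr ?_
        · exact h0.1.trans (by omega)
        · calc (2 * X * U ℝ ((k + 1 : ℕ) : ℤ)).natDegree
              ≤ (2 * X : ℝ[X]).natDegree + (U ℝ ((k + 1 : ℕ) : ℤ)).natDegree :=
              natDegree_mul_le
            _ ≤ 1 + (k + 1) := by
              gcongr
              · rw [show (2 * X : ℝ[X]) = C 2 * X by rw [map_ofNat]]
                exact (natDegree_C_mul_le 2 X).trans (by simp)
              · exact h1.1
            _ = k + 2 := by omega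
      · rw [hrec, coeff_sub, coeff_eq_zero_of_natDegree_lt (h0.1.trans_lt (by omega)),
          sub_zero]
        have h2 : (2 * X * U ℝ ((k + 1 : ℕ) : ℤ)) = C 2 * (X * U ℝ ((k + 1 : ℕ) : ℤ)) := by
          rw [map_ofNat]; ring
        rw [h2, coeff_C_mul, show k + 2 = (k + 1) + 1 from rfl, coeff_X_mul, h1.2]
        ring

open Finset in
/- Vandermonde-factored form: `det (sin(i αⱼ))_{i,j=1,…,d}
  = 2^{d(d-1)/2} ∏ⱼ sin αⱼ ∏_{i<j} (cos αⱼ - cos αᵢ)`. -/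
theorem det_sin_matrix_vandermonde_form
    (d : ℕ) (hd : 1 ≤ d)
    (α : Fin d → ℝ) (hα_mono : StrictMono α)
    (hα_pos : ∀ i, 0 < α i) (hα_lt : ∀ i, α i < Real.pi) :
    Matrix.det (Matrix.of fun i j : Fin d => Real.sin ((i.1 + 1 : ℕ) * α j))
      = 2 ^ (d * (d - 1) / 2) * (∏ j, Real.sin (α j)) *
        ∏ i, ∏ j ∈ Ioi i, (Real.cos (α j) - Real.cos (α i)) := by
  classical
  have hdeg : ∀ i : Fin d,
      (Polynomial.Chebyshev.U ℝ ((i : ℕ) : ℤ)).natDegree ≤ (i : ℕ) :=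
    fun i => (U_deg_coeff i).1
  have hM : (Matrix.of fun i j : Fin d => Real.sin ((i.1 + 1 : ℕ) * α j))
      = Matrix.of fun i j : Fin d => Real.sin (α j) *
          (Polynomial.Chebyshev.U ℝ ((i : ℕ) : ℤ)).eval (Real.cos (α j)) := by
    ext i j
    simp only [Matrix.of_apply]
    have h := Polynomial.Chebyshev.U_real_cos (α j) (i : ℕ)
    rw [mul_comm] at h
    push_cast at h ⊢
    rw [← h]
  rw [hM, Matrix.det_mul_row (fun j => Real.sin (α j)) ((fun i j : Fin d =>
        (Polynomial.Chebyshev.U ℝ ((i : ℕ) : ℤ)).eval (Real.cos (α j))) :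
        Matrix (Fin d) (Fin d) ℝ)]
  have htrans : ((fun i j : Fin d =>
        (Polynomial.Chebyshev.U ℝ ((i : ℕ) : ℤ)).eval (Real.cos (α j))) :
        Matrix (Fin d) (Fin d) ℝ)
      = (Matrix.of fun i j : Fin d =>
          ((fun k : Fin d => Polynomial.Chebyshev.U ℝ ((k : ℕ) : ℤ)) j).eval
            ((fun k : Fin d => Real.cos (α k)) i)).transpose := by
    ext i j; rfl
  rw [htrans, Matrix.det_transpose,
    Matrix.eval_matrixOfPolynomials_eq_vandermonde_mul_matrixOfPolynomials
      (fun k : Fin d => Real.cos (α k))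
      (fun k : Fin d => Polynomial.Chebyshev.U ℝ ((k : ℕ) : ℤ)) hdeg,
    Matrix.det_mul, Matrix.det_vandermonde]
  have hcoefdet : (Matrix.of fun i j : Fin d =>
        (Polynomial.Chebyshev.U ℝ ((j : ℕ) : ℤ)).coeff i).det
      = 2 ^ (d * (d - 1) / 2) := by
    rw [Matrix.det_of_upperTriangular (Matrix.matrixOfPolynomials_blockTriangular
      (fun k : Fin d => Polynomial.Chebyshev.U ℝ ((k : ℕ) : ℤ)) hdeg)]
    have hdiag : ∀ i : Fin d, (Matrix.of fun i j : Fin d =>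
        (Polynomial.Chebyshev.U ℝ ((j : ℕ) : ℤ)).coeff i) i i
        = 2 ^ (i : ℕ) := fun i => (U_deg_coeff i).2
    rw [Finset.prod_congr rfl fun i _ => hdiag i, Finset.prod_pow_eq_pow_sum]
    congr 1
    rw [Fin.sum_univ_eq_sum_range (fun i => i) d, Finset.sum_range_id]
  rw [hcoefdet]
  ring
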